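/- Let μ be a c-isoperimetric probability measure on ℝᵈ, let (xᵢ, zᵢ)ᵢ∈[n] be i.i.d. with xᵢ ∼ μ, E[zᵢ | xᵢ] = 0 and |zᵢ| ≤ 2 almost surely. Then for any fixed L-Lipschitz f : ℝᵈ → [−1,1] and ε > 0, P[(1/n)∑ᵢ (f(xᵢ) − E_μ[f]) zᵢ ≥ ε/8] ≤ 2exp(−ε²nd/(10⁴ c L²)). -/

import Mathlib

open MeasureTheory ProbabilityTheory
open Real Set

set_option maxHeartbeats 1000000

lemma exp_le_add_exp_sq (x : ℝ) : Real.exp x ≤ x + Real.exp (x ^ 2) := by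
  rcases le_or_gt x (-1) with h | h
  · have h1 : Real.exp x ≤ 1 := Real.exp_le_one_iff.mpr (by linarith)
    have h2 : 1 - x ≤ Real.exp (-x) := by
      have := Real.add_one_le_exp (-x); linarith
    have h3 : Real.exp (-x) ≤ Real.exp (x ^ 2) := by
      apply Real.exp_le_exp.mpr; nlinarith
    linarith
  rcases le_or_gt 1 x with h' | h'
  · have : Real.exp x ≤ Real.exp (x ^ 2) := by apply Real.exp_le_exp.mpr; nlinarith
    linarith
  · have hx : |x| ≤ 1 := abs_le.mpr ⟨by linarith, by linarith⟩
    have := Real.exp_bound hx (by norm_num : 0 < 2)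
    have hsum : ∑ i ∈ Finset.range 2, x ^ i / i.factorial = 1 + x := by
      simp [Finset.sum_range_succ]
    rw [hsum] at this
    have h2 : Real.exp x ≤ 1 + x + |x| ^ 2 * ((2 : ℕ).succ / ((2:ℕ).factorial * 2)) := by
      have := abs_le.mp this; linarith [this.2]
    have h3 : 1 + x ^ 2 ≤ Real.exp (x ^ 2) := by
      have := Real.add_one_le_exp (x ^ 2); linarith
    have : |x| ^ 2 = x ^ 2 := sq_abs x
    rw [this] at h2
    norm_num at h2
    nlinarith [sq_nonneg x]

lemma young_ineq {w : ℝ} (hw : 0 < w) (l y : ℝ) : l * y ≤ l ^ 2 * w + y ^ 2 / (4 * w) := by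
  rw [← sub_nonneg]
  have h : l ^ 2 * w + y ^ 2 / (4 * w) - l * y = (2 * l * w - y) ^ 2 / (4 * w) := by
    field_simp; ring
  rw [h]; positivity

lemma interval_int_exp (s : ℝ) (T : ℝ) :
    ∫ t in (0:ℝ)..T, s * Real.exp (s * t) = Real.exp (s * T) - 1 := by
  have hderiv : ∀ x ∈ Set.uIcc (0:ℝ) T, HasDerivAt (fun t => Real.exp (s * t))
      (s * Real.exp (s * x)) x := by
    intro x _
    simpa [mul_comm] using ((hasDerivAt_id x).const_mul s).exp
  have hint : IntervalIntegrable (fun x => s * Real.exp (s * x)) volume 0 T :=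
    (Continuous.intervalIntegrable (by continuity) 0 T)
  simpa using intervalIntegral.integral_eq_sub_of_hasDerivAt hderiv hint

lemma integral_Ioi_exp_neg_mul {b : ℝ} (hb : 0 < b) :
    ∫ t in Set.Ioi (0:ℝ), Real.exp (-(b * t)) = b⁻¹ := by
  have := integral_comp_mul_left_Ioi (fun u => Real.exp (-u)) 0 hb
  simp only [mul_zero, integral_exp_neg_Ioi, neg_zero, Real.exp_zero, smul_eq_mul, mul_one] at this
  simpa using this

lemma expsq_bound {Ω : Type*} [MeasureSpace Ω] [IsProbabilityMeasure (ℙ : Measure Ω)]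
    {Y : Ω → ℝ} (hY : Measurable Y) {B : ℝ} (hB : ∀ᵐ ω ∂(ℙ : Measure Ω), |Y ω| ≤ B)
    {w s : ℝ} (hw : 0 < w) (hs : 0 < s) (hsw : 2 * s * w < 1)
    (htail : ∀ t, 0 ≤ t → (ℙ : Measure Ω) {ω | t ≤ |Y ω|} ≤
      ENNReal.ofReal (2 * Real.exp (-t ^ 2 / (2 * w)))) :
    ∫ ω, Real.exp (s * (Y ω) ^ 2) ≤ 1 + 4 * s * w / (1 - 2 * s * w) := by
  set b : ℝ := 1 / (2 * w) - s with hb_def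
  have hb : 0 < b := by
    rw [hb_def, sub_pos, lt_div_iff₀ (by linarith)]
    linarith
  -- integrability of exp(s Y^2) - 1
  have hmeas : Measurable fun ω => Real.exp (s * (Y ω) ^ 2) - 1 :=
    ((hY.pow_const 2).const_mul s).exp.sub measurable_const
  have hint : Integrable (fun ω => Real.exp (s * (Y ω) ^ 2) - 1) (ℙ : Measure Ω) := by
    refine (integrable_const (Real.exp (s * B ^ 2))).mono' hmeas.aestronglyMeasurable ?_
    filter_upwards [hB] with ω hω
    have h1 : (1:ℝ) ≤ Real.exp (s * (Y ω) ^ 2) :=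
      Real.one_le_exp (by positivity)
    have hYB : (Y ω) ^ 2 ≤ B ^ 2 := by
      rw [← sq_abs]; exact pow_le_pow_left₀ (abs_nonneg _) hω 2
    have h2 : Real.exp (s * (Y ω) ^ 2) ≤ Real.exp (s * B ^ 2) :=
      Real.exp_le_exp.mpr (mul_le_mul_of_nonneg_left hYB hs.le)
    rw [Real.norm_eq_abs, abs_of_nonneg (by linarith)]
    linarith
  have hnn : ∀ ω, 0 ≤ Real.exp (s * (Y ω) ^ 2) - 1 := fun ω => by
    have : (1:ℝ) ≤ Real.exp (s * (Y ω) ^ 2) := Real.one_le_exp (by positivity)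
    linarith
  -- layer cake
  have hlc := lintegral_comp_eq_lintegral_meas_le_mul (ℙ : Measure Ω)
    (f := fun ω => (Y ω) ^ 2) (g := fun t => s * Real.exp (s * t))
    (ae_of_all _ fun ω => by positivity) (hY.pow_const 2).aemeasurable
    (fun t _ => Continuous.intervalIntegrable (by continuity) 0 t)
    (ae_of_all _ fun t => by positivity)
  have heq1 : ∀ ω, ENNReal.ofReal (∫ t in (0:ℝ)..((Y ω)^2), s * Real.exp (s * t)) =
      ENNReal.ofReal (Real.exp (s * (Y ω) ^ 2) - 1) := fun ω => by
    rw [interval_int_exp]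
  rw [lintegral_congr fun ω => heq1 ω] at hlc
  -- pointwise tail bound on the RHS integrand
  have hptwise : ∀ t ∈ Ioi (0:ℝ), (ℙ : Measure Ω) {a | t ≤ (Y a) ^ 2} *
      ENNReal.ofReal (s * Real.exp (s * t)) ≤
      ENNReal.ofReal (2 * s * Real.exp (-(b * t))) := by
    intro t ht
    have ht' : (0:ℝ) ≤ t := le_of_lt ht
    have hset : {a | t ≤ (Y a) ^ 2} = {a | Real.sqrt t ≤ |Y a|} := by
      ext a
      simp only [Set.mem_setOf_eq]
      constructor
      · intro h
        calc Real.sqrt t ≤ Real.sqrt ((Y a) ^ 2) := Real.sqrt_le_sqrt h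
          _ = |Y a| := Real.sqrt_sq_eq_abs _
      · intro h
        calc t = (Real.sqrt t) ^ 2 := (Real.sq_sqrt ht').symm
          _ ≤ |Y a| ^ 2 := pow_le_pow_left₀ (Real.sqrt_nonneg t) h 2
          _ = (Y a) ^ 2 := sq_abs _
    have hmeasle : (ℙ : Measure Ω) {a | t ≤ (Y a) ^ 2} ≤
        ENNReal.ofReal (2 * Real.exp (-t / (2 * w))) := by
      rw [hset]
      have := htail (Real.sqrt t) (Real.sqrt_nonneg t)
      rwa [Real.sq_sqrt ht'] at this
    calc (ℙ : Measure Ω) {a | t ≤ (Y a) ^ 2} * ENNReal.ofReal (s * Real.exp (s * t))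
        ≤ ENNReal.ofReal (2 * Real.exp (-t / (2 * w))) * ENNReal.ofReal (s * Real.exp (s * t)) :=
          mul_le_mul_left hmeasle _
      _ = ENNReal.ofReal (2 * s * Real.exp (-(b * t))) := by
          rw [← ENNReal.ofReal_mul (by positivity)]
          congr 1
          have harg : -t / (2 * w) + s * t = -(b * t) := by
            rw [hb_def]; field_simp; ring
          rw [show (2 : ℝ) * Real.exp (-t / (2 * w)) * (s * Real.exp (s * t)) =
            2 * s * (Real.exp (-t / (2 * w)) * Real.exp (s * t)) by ring,
            ← Real.exp_add, harg]
  -- integrable on Ioi 0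
  have hintexp : IntegrableOn (fun t => 2 * s * Real.exp (-(b * t))) (Ioi (0:ℝ)) volume := by
    have h0 : IntegrableOn (fun t => Real.exp (-b * t)) (Ioi (0:ℝ)) volume :=
      exp_neg_integrableOn_Ioi 0 hb
    have h1 := h0.const_mul (2 * s)
    simp only [neg_mul] at h1
    exact h1
  have hval : ∫ t in Ioi (0:ℝ), 2 * s * Real.exp (-(b * t)) = 2 * s * b⁻¹ := by
    rw [MeasureTheory.integral_const_mul, integral_Ioi_exp_neg_mul hb]
  have hRHS : ∫⁻ t in Ioi (0:ℝ), (ℙ : Measure Ω) {a | t ≤ (Y a) ^ 2} *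
      ENNReal.ofReal (s * Real.exp (s * t)) ≤ ENNReal.ofReal (2 * s * b⁻¹) := by
    calc ∫⁻ t in Ioi (0:ℝ), (ℙ : Measure Ω) {a | t ≤ (Y a) ^ 2} *
        ENNReal.ofReal (s * Real.exp (s * t))
        ≤ ∫⁻ t in Ioi (0:ℝ), ENNReal.ofReal (2 * s * Real.exp (-(b * t))) := by
          refine lintegral_mono_ae ?_
          filter_upwards [ae_restrict_mem measurableSet_Ioi] with t ht
          exact hptwise t ht
      _ = ENNReal.ofReal (∫ t in Ioi (0:ℝ), 2 * s * Real.exp (-(b * t))) :=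
          (MeasureTheory.ofReal_integral_eq_lintegral_ofReal hintexp
            (ae_of_all _ fun t => by positivity)).symm
      _ = ENNReal.ofReal (2 * s * b⁻¹) := by rw [hval]
  -- put it together
  have hofReal : ENNReal.ofReal (∫ ω, (Real.exp (s * (Y ω) ^ 2) - 1)) ≤
      ENNReal.ofReal (2 * s * b⁻¹) := by
    rw [MeasureTheory.ofReal_integral_eq_lintegral_ofReal hint
      (ae_of_all _ fun ω => hnn ω), hlc]
    exact hRHS
  have hreal : ∫ ω, (Real.exp (s * (Y ω) ^ 2) - 1) ≤ 2 * s * b⁻¹ := by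
    have h2sb : (0:ℝ) ≤ 2 * s * b⁻¹ := by positivity
    exact (ENNReal.ofReal_le_ofReal_iff h2sb).mp hofReal
  have hintexp2 : Integrable (fun ω => Real.exp (s * (Y ω) ^ 2)) (ℙ : Measure Ω) := by
    have h := hint.add (integrable_const (1:ℝ))
    exact h.congr (ae_of_all _ fun ω => by simp)
  have hsub : ∫ ω, (Real.exp (s * (Y ω) ^ 2) - 1) =
      (∫ ω, Real.exp (s * (Y ω) ^ 2)) - 1 := by
    rw [integral_sub hintexp2 (integrable_const 1)]
    simp
  rw [hsub] at hreal
  have hfinal : 2 * s * b⁻¹ = 4 * s * w / (1 - 2 * s * w) := by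
    rw [hb_def]
    rw [show (1:ℝ) / (2 * w) - s = (1 - 2 * s * w) / (2 * w) by field_simp]
    rw [inv_div]
    field_simp
    ring
  rw [hfinal] at hreal
  linarith

lemma mgf_of_tail {Ω : Type*} [MeasureSpace Ω] [IsProbabilityMeasure (ℙ : Measure Ω)]
    {Y : Ω → ℝ} (hY : Measurable Y) {B : ℝ} (hB : ∀ᵐ ω ∂(ℙ : Measure Ω), |Y ω| ≤ B)
    {w : ℝ} (hw : 0 < w) (hmean : ∫ ω, Y ω = 0)
    (htail : ∀ t, 0 ≤ t → (ℙ : Measure Ω) {ω | t ≤ |Y ω|} ≤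
      ENNReal.ofReal (2 * Real.exp (-t ^ 2 / (2 * w)))) (l : ℝ) :
    ∫ ω, Real.exp (l * Y ω) ≤ Real.exp (8 * l ^ 2 * w) := by
  have hBnn : 0 ≤ B := by
    by_contra hcon
    push_neg at hcon
    have : ∀ᵐ ω ∂(ℙ : Measure Ω), False := by
      filter_upwards [hB] with ω hω
      exact absurd (lt_of_le_of_lt hω hcon) (not_lt.mpr (abs_nonneg _))
    exact (IsProbabilityMeasure.ne_zero (ℙ : Measure Ω)) (by simpa using this)
  have hYint : Integrable Y (ℙ : Measure Ω) :=
    (integrable_const B).mono' hY.aestronglyMeasurable (by filter_upwards [hB] with ω h using h)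
  have hexpint : ∀ a : ℝ, Integrable (fun ω => Real.exp (a * Y ω)) (ℙ : Measure Ω) := by
    intro a
    refine (integrable_const (Real.exp (|a| * B))).mono'
      ((hY.const_mul a).exp).aestronglyMeasurable ?_
    filter_upwards [hB] with ω hω
    rw [Real.norm_eq_abs, abs_of_pos (Real.exp_pos _)]
    apply Real.exp_le_exp.mpr
    calc a * Y ω ≤ |a * Y ω| := le_abs_self _
      _ = |a| * |Y ω| := abs_mul _ _
      _ ≤ |a| * B := mul_le_mul_of_nonneg_left hω (abs_nonneg a)
  have hexpsqint : ∀ a : ℝ, 0 ≤ a →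
      Integrable (fun ω => Real.exp (a * (Y ω) ^ 2)) (ℙ : Measure Ω) := by
    intro a ha
    refine (integrable_const (Real.exp (a * B ^ 2))).mono'
      ((hY.pow_const 2).const_mul a).exp.aestronglyMeasurable ?_
    filter_upwards [hB] with ω hω
    rw [Real.norm_eq_abs, abs_of_pos (Real.exp_pos _)]
    apply Real.exp_le_exp.mpr
    have : (Y ω) ^ 2 ≤ B ^ 2 := by
      rw [← sq_abs]; exact pow_le_pow_left₀ (abs_nonneg _) hω 2
    exact mul_le_mul_of_nonneg_left this ha
  rcases eq_or_ne l 0 with rfl | hl0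
  · simp
  have hl2 : 0 < l ^ 2 := by positivity
  rcases le_or_gt (l ^ 2) (1 / (4 * w)) with hcase | hcase
  · -- small lambda case
    have hsw : 2 * l ^ 2 * w ≤ 1 / 2 := by
      have h4 : l ^ 2 * (4 * w) ≤ 1 := (le_div_iff₀ (by positivity)).mp hcase
      nlinarith
    have hsw' : 2 * l ^ 2 * w < 1 := by linarith
    have hpt : ∀ ω, Real.exp (l * Y ω) ≤ l * Y ω + Real.exp (l ^ 2 * (Y ω) ^ 2) := by
      intro ω
      have := exp_le_add_exp_sq (l * Y ω)
      rwa [mul_pow] at this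
    have hrhsint : Integrable (fun ω => l * Y ω + Real.exp (l ^ 2 * (Y ω) ^ 2))
        (ℙ : Measure Ω) := (hYint.const_mul l).add (hexpsqint _ hl2.le)
    calc ∫ ω, Real.exp (l * Y ω)
        ≤ ∫ ω, (l * Y ω + Real.exp (l ^ 2 * (Y ω) ^ 2)) :=
          integral_mono (hexpint l) hrhsint hpt
      _ = l * (∫ ω, Y ω) + ∫ ω, Real.exp (l ^ 2 * (Y ω) ^ 2) := by
          rw [integral_add (hYint.const_mul l) (hexpsqint _ hl2.le), MeasureTheory.integral_const_mul]
      _ = ∫ ω, Real.exp (l ^ 2 * (Y ω) ^ 2) := by rw [hmean]; ring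
      _ ≤ 1 + 4 * l ^ 2 * w / (1 - 2 * l ^ 2 * w) := expsq_bound hY hB hw hl2 hsw' htail
      _ ≤ 1 + 8 * l ^ 2 * w := by
          have h1 : (1:ℝ) / 2 ≤ 1 - 2 * l ^ 2 * w := by linarith
          have h2 : 4 * l ^ 2 * w / (1 - 2 * l ^ 2 * w) ≤ 4 * l ^ 2 * w / (1 / 2) :=
            div_le_div_of_nonneg_left (by positivity) (by norm_num) h1
          have h3 : 4 * l ^ 2 * w / ((1:ℝ) / 2) = 8 * l ^ 2 * w := by ring
          linarith
      _ ≤ Real.exp (8 * l ^ 2 * w) := by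
          have := Real.add_one_le_exp (8 * l ^ 2 * w); linarith
  · -- large lambda case
    have hs' : (0:ℝ) < 1 / (4 * w) := by positivity
    have hsw' : 2 * (1 / (4 * w)) * w < 1 := by
      rw [show 2 * (1 / (4 * w)) * w = 1 / 2 by field_simp; ring]; norm_num
    have hexpsq := expsq_bound hY hB hw hs' hsw' htail
    have hval : 1 + 4 * (1 / (4 * w)) * w / (1 - 2 * (1 / (4 * w)) * w) = 3 := by
      have h1 : 1 - 2 * (1 / (4 * w)) * w = 1 / 2 := by field_simp; ring
      have h2 : 4 * (1 / (4 * w)) * w = 1 := by field_simp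
      rw [h1, h2]; norm_num
    rw [hval] at hexpsq
    have hpt : ∀ ω, Real.exp (l * Y ω) ≤
        Real.exp (l ^ 2 * w) * Real.exp ((1 / (4 * w)) * (Y ω) ^ 2) := by
      intro ω
      rw [← Real.exp_add]
      apply Real.exp_le_exp.mpr
      have := young_ineq hw l (Y ω)
      have heq : (Y ω) ^ 2 / (4 * w) = 1 / (4 * w) * (Y ω) ^ 2 := by ring
      linarith [heq ▸ this]
    calc ∫ ω, Real.exp (l * Y ω)
        ≤ ∫ ω, Real.exp (l ^ 2 * w) * Real.exp ((1 / (4 * w)) * (Y ω) ^ 2) :=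
          integral_mono (hexpint l) ((hexpsqint _ hs'.le).const_mul _) hpt
      _ = Real.exp (l ^ 2 * w) * ∫ ω, Real.exp ((1 / (4 * w)) * (Y ω) ^ 2) :=
          MeasureTheory.integral_const_mul _ _
      _ ≤ Real.exp (l ^ 2 * w) * 3 := by
          have := (Real.exp_pos (l ^ 2 * w)).le
          exact mul_le_mul_of_nonneg_left hexpsq this
      _ ≤ Real.exp (8 * l ^ 2 * w) := by
          have h3 : (3:ℝ) ≤ Real.exp (7 * l ^ 2 * w) := by
            have hgt : (7:ℝ) / 4 ≤ 7 * l ^ 2 * w := by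
              have h4 : 1 < l ^ 2 * (4 * w) := (div_lt_iff₀ (by positivity)).mp hcase
              nlinarith
            have h78 : Real.exp (7 / 8) * Real.exp (7 / 8) = Real.exp (7 / 4) := by
              rw [← Real.exp_add]; norm_num
            have hb1 := Real.add_one_le_exp ((7:ℝ) / 8)
            have : (3:ℝ) ≤ Real.exp (7 / 4) := by nlinarith [Real.exp_pos ((7:ℝ)/8)]
            calc (3:ℝ) ≤ Real.exp (7 / 4) := this
              _ ≤ Real.exp (7 * l ^ 2 * w) := Real.exp_le_exp.mpr hgt
          calc Real.exp (l ^ 2 * w) * 3 ≤ Real.exp (l ^ 2 * w) * Real.exp (7 * l ^ 2 * w) :=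
              mul_le_mul_of_nonneg_left h3 (Real.exp_pos _).le
            _ = Real.exp (8 * l ^ 2 * w) := by rw [← Real.exp_add]; ring_nf


lemma mean_zero_aux {Ω E : Type*} [MeasureSpace Ω] [IsProbabilityMeasure (ℙ : Measure Ω)]
    [MeasurableSpace E] {x : Ω → E} {z : Ω → ℝ} (hx : Measurable x)
    (hzint : Integrable z (ℙ : Measure Ω)) {g : E → ℝ} (hg : Measurable g)
    (hcond : (ℙ : Measure Ω)[z | MeasurableSpace.comap x inferInstance]
      =ᵐ[(ℙ : Measure Ω)] (0 : Ω → ℝ))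
    (hint : Integrable (fun ω => g (x ω) * z ω) (ℙ : Measure Ω)) :
    ∫ ω, g (x ω) * z ω = 0 := by
  have hm'le : MeasurableSpace.comap x inferInstance ≤ _ := hx.comap_le
  have hxm' : Measurable[MeasurableSpace.comap x inferInstance] x :=
    measurable_iff_comap_le.mpr le_rfl
  have hgx_sm : StronglyMeasurable[MeasurableSpace.comap x inferInstance]
      (fun ω => g (x ω)) := (hg.comp hxm').stronglyMeasurable
  have hmul : (fun ω => g (x ω)) * z = fun ω => g (x ω) * z ω := rfl
  have hpull := condExp_mul_of_stronglyMeasurable_left hgx_sm (hmul ▸ hint) hzint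
  calc ∫ ω, g (x ω) * z ω
      = ∫ ω, ((ℙ : Measure Ω)[(fun ω => g (x ω) * z ω) |
          MeasurableSpace.comap x inferInstance]) ω := (integral_condExp hm'le).symm
    _ = 0 := by
        have hcongr : (ℙ : Measure Ω)[(fun ω => g (x ω) * z ω) |
            MeasurableSpace.comap x inferInstance] =ᵐ[(ℙ : Measure Ω)] 0 := by
          refine (hmul ▸ hpull).trans ?_
          filter_upwards [hcond] with ω hω
          simp [hω]
        rw [integral_congr_ae hcongr]
        simp



/-- `μ` on `ℝᵈ` satisfies `c`-isoperimetry. -/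
def Isoperimetric (d : ℕ) (c : ℝ) (μ : Measure (EuclideanSpace ℝ (Fin d))) : Prop :=
  ∀ (L : ℝ), 0 < L → ∀ (f : EuclideanSpace ℝ (Fin d) → ℝ),
    (∃ M, ∀ x, |f x| ≤ M) → LipschitzWith (Real.toNNReal L) f →
    ∀ t : ℝ, 0 ≤ t →
      μ {x | t ≤ |f x - ∫ y, f y ∂μ|} ≤
        ENNReal.ofReal (2 * Real.exp (-(d * t ^ 2) / (2 * c * L ^ 2)))

/-- single-function correlation bound. For `xᵢ ∼ μ` `c`-isoperimetric,
`E[zᵢ|xᵢ] = 0`, `|zᵢ| ≤ 2`, and `f : ℝᵈ → [-1,1]` an `L`-Lipschitz function,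
`P[(1/n) ∑ᵢ (f(xᵢ) - E_μ f) zᵢ ≥ ε/8] ≤ 2 exp(-ε²nd/(10⁴cL²))`. -/
theorem single_function_correlation_bound
    {Ω : Type*} [MeasureSpace Ω] [IsProbabilityMeasure (ℙ : Measure Ω)]
    (d n : ℕ) (hd : 0 < d) (hn : 0 < n) (c L ε : ℝ) (hc : 0 < c) (hL : 0 < L)
    (hε : 0 < ε)
    (μ : Measure (EuclideanSpace ℝ (Fin d))) [IsProbabilityMeasure μ]
    (hiso : Isoperimetric d c μ)
    (x : Fin n → Ω → EuclideanSpace ℝ (Fin d)) (z : Fin n → Ω → ℝ)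
    (hxmeas : ∀ i, Measurable (x i)) (hzmeas : ∀ i, Measurable (z i))
    (hlaw : ∀ i, Measure.map (x i) ℙ = μ)
    (hindep : iIndepFun (fun i ω => (x i ω, z i ω)) ℙ)
    (hident : ∀ i j, IdentDistrib (fun ω => (x i ω, z i ω)) (fun ω => (x j ω, z j ω)) ℙ ℙ)
    (hcond : ∀ i, (ℙ : Measure Ω)[z i | MeasurableSpace.comap (x i) inferInstance]
      =ᵐ[(ℙ : Measure Ω)] (0 : Ω → ℝ))
    (hbdd : ∀ i, ∀ᵐ ω ∂(ℙ : Measure Ω), |z i ω| ≤ 2)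
    (f : EuclideanSpace ℝ (Fin d) → ℝ)
    (hf1 : ∀ v, f v ∈ Set.Icc (-1 : ℝ) 1)
    (hlip : LipschitzWith (Real.toNNReal L) f) :
    (ℙ : Measure Ω) {ω | ε / 8 ≤ (1 / n : ℝ) * ∑ i, (f (x i ω) - ∫ y, f y ∂μ) * z i ω} ≤
      ENNReal.ofReal (2 * Real.exp (-(ε ^ 2 * n * d) / (10 ^ 4 * c * L ^ 2))) := by
  have hd0 : (0:ℝ) < d := by exact_mod_cast hd
  have hn0 : (0:ℝ) < n := by exact_mod_cast hn
  set m : ℝ := ∫ y, f y ∂μ with hm_def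
  set g : EuclideanSpace ℝ (Fin d) → ℝ := fun v => f v - m with hg_def
  set Y : Fin n → Ω → ℝ := fun i ω => g (x i ω) * z i ω with hY_def
  have hfmeas : Measurable f := hlip.continuous.measurable
  have hgmeas : Measurable g := hfmeas.sub measurable_const
  have hfabs : ∀ v, |f v| ≤ 1 := fun v => abs_le.mpr ⟨(hf1 v).1, (hf1 v).2⟩
  have hfint : Integrable f μ :=
    (integrable_const 1).mono' hfmeas.aestronglyMeasurable
      (ae_of_all _ fun v => by rw [Real.norm_eq_abs]; exact hfabs v)
  have hm1 : |m| ≤ 1 := by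
    rw [hm_def]
    calc |∫ y, f y ∂μ| = ‖∫ y, f y ∂μ‖ := (Real.norm_eq_abs _).symm
      _ ≤ ∫ y, ‖f y‖ ∂μ := norm_integral_le_integral_norm f
      _ = ∫ y, |f y| ∂μ := by simp [Real.norm_eq_abs]
      _ ≤ ∫ _, (1:ℝ) ∂μ := integral_mono (by simpa [Real.norm_eq_abs] using hfint.norm)
          (integrable_const 1) hfabs
      _ = 1 := by simp
  have hgb : ∀ v, |g v| ≤ 2 := by
    intro v
    rw [hg_def]
    calc |f v - m| ≤ |f v| + |m| := abs_sub _ _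
      _ ≤ 2 := by linarith [hfabs v, hm1]
  have hYmeas : ∀ i, Measurable (Y i) := fun i =>
    (hgmeas.comp (hxmeas i)).mul (hzmeas i)
  have hYbdd : ∀ i, ∀ᵐ ω ∂(ℙ : Measure Ω), |Y i ω| ≤ 4 := by
    intro i
    filter_upwards [hbdd i] with ω hω
    rw [hY_def]
    calc |g (x i ω) * z i ω| = |g (x i ω)| * |z i ω| := abs_mul _ _
      _ ≤ 2 * 2 := mul_le_mul (hgb _) hω (abs_nonneg _) (by norm_num)
      _ = 4 := by norm_num
  set w : ℝ := 4 * c * L ^ 2 / d with hw_def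
  have hw : 0 < w := by rw [hw_def]; positivity
  -- tail bound
  have htail : ∀ i, ∀ t, 0 ≤ t → (ℙ : Measure Ω) {ω | t ≤ |Y i ω|} ≤
      ENNReal.ofReal (2 * Real.exp (-t ^ 2 / (2 * w))) := by
    intro i t ht
    have hNzero : (ℙ : Measure Ω) {ω | ¬ |z i ω| ≤ 2} = 0 := ae_iff.mp (hbdd i)
    have hsub : {ω | t ≤ |Y i ω|} ⊆
        {ω | t / 2 ≤ |g (x i ω)|} ∪ {ω | ¬ |z i ω| ≤ 2} := by
      intro ω hω
      by_cases hz : |z i ω| ≤ 2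
      · left
        simp only [Set.mem_setOf_eq] at hω ⊢
        rw [hY_def] at hω
        have h1 : |g (x i ω) * z i ω| = |g (x i ω)| * |z i ω| := abs_mul _ _
        have h2 : |g (x i ω)| * |z i ω| ≤ |g (x i ω)| * 2 :=
          mul_le_mul_of_nonneg_left hz (abs_nonneg _)
        linarith [hω, h1 ▸ hω]
      · right; exact hz
    have hBmeas : MeasurableSet {v : EuclideanSpace ℝ (Fin d) | t / 2 ≤ |g v|} :=
      measurableSet_le measurable_const hgmeas.abs
    have hmap : (ℙ : Measure Ω) {ω | t / 2 ≤ |g (x i ω)|} =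
        μ {v | t / 2 ≤ |g v|} := by
      rw [← hlaw i, Measure.map_apply (hxmeas i) hBmeas]
      rfl
    have hisoapp := hiso L hL f ⟨1, hfabs⟩ hlip (t / 2) (by linarith)
    have hexpeq : -((d:ℝ) * (t / 2) ^ 2) / (2 * c * L ^ 2) = -t ^ 2 / (2 * w) := by
      rw [hw_def]
      field_simp
      ring
    calc (ℙ : Measure Ω) {ω | t ≤ |Y i ω|}
        ≤ (ℙ : Measure Ω) ({ω | t / 2 ≤ |g (x i ω)|} ∪ {ω | ¬ |z i ω| ≤ 2}) :=
          measure_mono hsub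
      _ ≤ (ℙ : Measure Ω) {ω | t / 2 ≤ |g (x i ω)|} +
          (ℙ : Measure Ω) {ω | ¬ |z i ω| ≤ 2} := measure_union_le _ _
      _ = μ {v | t / 2 ≤ |g v|} := by rw [hNzero, hmap, add_zero]
      _ ≤ ENNReal.ofReal (2 * Real.exp (-((d:ℝ) * (t / 2) ^ 2) / (2 * c * L ^ 2))) :=
          hisoapp
      _ = ENNReal.ofReal (2 * Real.exp (-t ^ 2 / (2 * w))) := by rw [hexpeq]
  -- mean zero
  have hzint : ∀ i, Integrable (z i) (ℙ : Measure Ω) := fun i =>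
    (integrable_const 2).mono' (hzmeas i).aestronglyMeasurable
      (by filter_upwards [hbdd i] with ω h using h)
  have hYint : ∀ i, Integrable (Y i) (ℙ : Measure Ω) := fun i =>
    (integrable_const 4).mono' (hYmeas i).aestronglyMeasurable
      (by filter_upwards [hYbdd i] with ω h using h)
  have hYmean : ∀ i, ∫ ω, Y i ω = 0 := fun i =>
    mean_zero_aux (hxmeas i) (hzint i) hgmeas (hcond i) (hYint i)
  -- independence
  have hindepY : iIndepFun Y (ℙ : Measure Ω) := by
    have hφ : ∀ _ : Fin n, Measurable
        (fun p : EuclideanSpace ℝ (Fin d) × ℝ => g p.1 * p.2) := fun _ =>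
      (hgmeas.comp measurable_fst).mul measurable_snd
    exact hindep.comp _ hφ
  -- mgf bound for each Y i
  set l : ℝ := ε / 8 / (16 * w) with hl_def
  have hl : 0 < l := by rw [hl_def]; positivity
  have hmgf : ∀ i, mgf (Y i) (ℙ : Measure Ω) l ≤ Real.exp (8 * l ^ 2 * w) := fun i =>
    mgf_of_tail (hYmeas i) (hYbdd i) hw (hYmean i) (htail i) l
  -- Chernoff
  set S : Ω → ℝ := fun ω => ∑ i, Y i ω with hS_def
  have hSmeas : Measurable S := by
    rw [hS_def]; exact Finset.measurable_sum _ fun i _ => hYmeas i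
  have hSbdd : ∀ᵐ ω ∂(ℙ : Measure Ω), |S ω| ≤ 4 * n := by
    have hall : ∀ᵐ ω ∂(ℙ : Measure Ω), ∀ i, |Y i ω| ≤ 4 := ae_all_iff.mpr hYbdd
    filter_upwards [hall] with ω hω
    rw [hS_def]
    calc |∑ i, Y i ω| ≤ ∑ i, |Y i ω| := Finset.abs_sum_le_sum_abs _ _
      _ ≤ ∑ _i : Fin n, (4:ℝ) := Finset.sum_le_sum fun i _ => hω i
      _ = 4 * n := by simp [mul_comm]
  have hSint : Integrable (fun ω => Real.exp (l * S ω)) (ℙ : Measure Ω) := by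
    refine (integrable_const (Real.exp (l * (4 * n)))).mono'
      ((hSmeas.const_mul l).exp).aestronglyMeasurable ?_
    filter_upwards [hSbdd] with ω hω
    rw [Real.norm_eq_abs, abs_of_pos (Real.exp_pos _)]
    apply Real.exp_le_exp.mpr
    have := (abs_le.mp hω).2
    exact mul_le_mul_of_nonneg_left this hl.le
  have hchern := measure_ge_le_exp_mul_mgf (X := S) (μ := (ℙ : Measure Ω)) (t := l)
    ((n:ℝ) * (ε / 8)) hl.le hSint
  have hsum_eq : (∑ i, Y i) = S := by
    funext ω; rw [hS_def]; exact Finset.sum_apply ω Finset.univ Y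
  have hmgfS : mgf S (ℙ : Measure Ω) l ≤ Real.exp (8 * l ^ 2 * w) ^ n := by
    rw [← hsum_eq, iIndepFun.mgf_sum hindepY hYmeas Finset.univ]
    calc ∏ i, mgf (Y i) (ℙ : Measure Ω) l ≤ ∏ _i : Fin n, Real.exp (8 * l ^ 2 * w) :=
        Finset.prod_le_prod (fun i _ => mgf_nonneg) (fun i _ => hmgf i)
      _ = Real.exp (8 * l ^ 2 * w) ^ n := by simp
  -- event identification
  have hevent : {ω | ε / 8 ≤ (1 / n : ℝ) * ∑ i, (f (x i ω) - ∫ y, f y ∂μ) * z i ω} =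
      {ω | (n:ℝ) * (ε / 8) ≤ S ω} := by
    ext ω
    simp only [Set.mem_setOf_eq, hS_def, hY_def, hg_def, ← hm_def]
    rw [one_div_mul_eq_div, le_div_iff₀ hn0]
    constructor <;> intro h <;> linarith [h]
  -- numeric computation
  have hexp_eq : Real.exp (-l * ((n:ℝ) * (ε / 8))) * Real.exp (8 * l ^ 2 * w) ^ n =
      Real.exp (-(n:ℝ) * (ε ^ 2 * d / (8192 * c * L ^ 2))) := by
    rw [← Real.exp_nat_mul, ← Real.exp_add]
    congr 1
    rw [hl_def, hw_def]
    field_simp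
    ring
  have hfin : Real.exp (-(n:ℝ) * (ε ^ 2 * d / (8192 * c * L ^ 2))) ≤
      2 * Real.exp (-(ε ^ 2 * n * d) / (10 ^ 4 * c * L ^ 2)) := by
    have h1 : Real.exp (-(n:ℝ) * (ε ^ 2 * d / (8192 * c * L ^ 2))) ≤
        Real.exp (-(ε ^ 2 * n * d) / (10 ^ 4 * c * L ^ 2)) := by
      apply Real.exp_le_exp.mpr
      rw [neg_mul, neg_div, neg_le_neg_iff,
        show (n:ℝ) * (ε ^ 2 * d / (8192 * c * L ^ 2)) = ε ^ 2 * n * d / (8192 * c * L ^ 2)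
          by ring]
      have hnum : (0:ℝ) ≤ ε ^ 2 * n * d := by positivity
      have hden : (0:ℝ) < 8192 * c * L ^ 2 := by positivity
      have hle : (8192:ℝ) * c * L ^ 2 ≤ 10 ^ 4 * c * L ^ 2 := by nlinarith
      exact div_le_div_of_nonneg_left hnum hden hle
    nlinarith [Real.exp_pos (-(ε ^ 2 * (n:ℝ) * d) / (10 ^ 4 * c * L ^ 2))]
  -- conclude
  rw [hevent]
  have hne : (ℙ : Measure Ω) {ω | (n:ℝ) * (ε / 8) ≤ S ω} ≠ ⊤ := measure_ne_top _ _
  rw [← ENNReal.ofReal_toReal hne]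
  apply ENNReal.ofReal_le_ofReal
  calc ((ℙ : Measure Ω) {ω | (n:ℝ) * (ε / 8) ≤ S ω}).toReal
      ≤ Real.exp (-l * ((n:ℝ) * (ε / 8))) * mgf S (ℙ : Measure Ω) l := hchern
    _ ≤ Real.exp (-l * ((n:ℝ) * (ε / 8))) * Real.exp (8 * l ^ 2 * w) ^ n :=
        mul_le_mul_of_nonneg_left hmgfS (Real.exp_pos _).le
    _ = Real.exp (-(n:ℝ) * (ε ^ 2 * d / (8192 * c * L ^ 2))) := hexp_eq
    _ ≤ 2 * Real.exp (-(ε ^ 2 * n * d) / (10 ^ 4 * c * L ^ 2)) := hfin
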